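/- Let p₀ be a positive integer and γ₀ ∈ ℝ with p₀ − 2 > γ₀ > 4, let p ≥ 1 be real, s₀ ≥ 0, δ₁ > 0, K ≥ 0, and let v : [s₀, s₀ + δ₁] → Ω → ℝ be a jointly measurable stochastic process on a probability space (Ω, F, P) such that E[|v(t) − v(s)|^{2p₀p}] ≤ K |t − s|^{p₀ p / 2} for all t, s ∈ [s₀, s₀ + δ₁]. For r ∈ [s₀, s₀ + δ₁] define Y_r(ω) := ∫_{s₀}^{r} ∫_{s₀}^{r} (v(t)(ω) − v(s)(ω))^{2p₀} |t − s|^{−γ₀/2} ds dt. Then for all r ∈ [s₀, s₀ + δ₁], E[|Y_r|^p] ≤ K (r − s₀)^{2p} δ₁^{(p₀ − γ₀)p/2}. -/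
import Mathlib


open MeasureTheory Set Real
open scoped ENNReal

lemma jensen_aux {α : Type*} [MeasurableSpace α] (μ : Measure α) {f : α → ℝ≥0∞}
    (hf : AEMeasurable f μ) {p : ℝ} (hp : 1 ≤ p) :
    (∫⁻ a, f a ∂μ) ^ p ≤ μ Set.univ ^ (p - 1) * ∫⁻ a, f a ^ p ∂μ := by
  rcases eq_or_lt_of_le hp with h | h
  · rw [← h]; simp
  · have hp0 : (0:ℝ) < p := lt_trans one_pos h
    have hpq := Real.HolderConjugate.conjExponent h
    have key := ENNReal.lintegral_mul_le_Lp_mul_Lq μ hpq hf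
      (aemeasurable_const (b := (1 : ℝ≥0∞)))
    simp only [mul_one, ENNReal.one_rpow, lintegral_const, mul_one] at key
    have key2 := ENNReal.rpow_le_rpow key hp0.le
    rw [ENNReal.mul_rpow_of_nonneg _ _ hp0.le, ← ENNReal.rpow_mul, ← ENNReal.rpow_mul,
      one_div, inv_mul_cancel₀ hp0.ne', ENNReal.rpow_one] at key2
    have hq : (1 / Real.conjExponent p) * p = p - 1 := by
      rw [Real.conjExponent]
      field_simp
    simp only [hq, Pi.mul_apply, mul_one, one_mul] at key2
    calc (∫⁻ a, f a ∂μ) ^ p ≤ (∫⁻ a, f a ^ p ∂μ) * μ Set.univ ^ (p - 1) := key2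
      _ = μ Set.univ ^ (p - 1) * ∫⁻ a, f a ^ p ∂μ := mul_comm _ _


/-- Lemma 3.5(a) of the paper: moment bound for
`Y_r = ∫_{[s₀,r]²} (v t - v s)^{2p₀} / |t-s|^{γ₀/2} ds dt`, for any jointly measurable process
`v` on `[s₀, s₀+δ₁]` with `E[|v t - v s|^{2p₀p}] ≤ K |t-s|^{p₀p/2}`. -/
theorem stmt3 {Ω : Type*} [MeasurableSpace Ω] (P : Measure Ω) [IsProbabilityMeasure P]
    (p₀ : ℕ) (hp₀ : 0 < p₀) (γ₀ : ℝ) (h1 : γ₀ < (p₀ : ℝ) - 2) (h2 : 4 < γ₀)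
    (p : ℝ) (hp : 1 ≤ p) (s₀ : ℝ) (hs₀ : 0 ≤ s₀) (δ₁ : ℝ) (hδ₁ : 0 < δ₁)
    (K : ℝ) (hK : 0 ≤ K) (v : ℝ → Ω → ℝ)
    (hmeas : Measurable (fun q : ℝ × Ω => v q.1 q.2))
    (hmom : ∀ t ∈ Icc s₀ (s₀ + δ₁), ∀ s ∈ Icc s₀ (s₀ + δ₁),
      ∫⁻ ω, ENNReal.ofReal (|v t ω - v s ω| ^ (2 * (p₀ : ℝ) * p)) ∂P ≤
        ENNReal.ofReal (K * |t - s| ^ ((p₀ : ℝ) * p / 2))) :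
    ∀ r ∈ Icc s₀ (s₀ + δ₁),
      ∫⁻ ω, (∫⁻ t in Icc s₀ r, ∫⁻ s in Icc s₀ r,
          ENNReal.ofReal ((v t ω - v s ω) ^ (2 * p₀) / |t - s| ^ (γ₀ / 2))) ^ p ∂P ≤
        ENNReal.ofReal (K * (r - s₀) ^ (2 * p) * δ₁ ^ (((p₀ : ℝ) - γ₀) * p / 2)) := by
  intro r hr
  obtain ⟨hr1, hr2⟩ := hr
  have hp0 : (0:ℝ) < p := lt_of_lt_of_le one_pos hp
  set e : ℝ := ((p₀:ℝ) - γ₀) * p / 2 with he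
  have he0 : 0 ≤ e := by
    have : (0:ℝ) ≤ (p₀:ℝ) - γ₀ := by linarith
    positivity
  have hrs : 0 ≤ r - s₀ := by linarith
  set G : (ℝ × ℝ) → Ω → ℝ≥0∞ := fun q ω =>
    ENNReal.ofReal ((v q.1 ω - v q.2 ω) ^ (2 * p₀) / |q.1 - q.2| ^ (γ₀ / 2)) with hGdef
  set ν : Measure ℝ := volume.restrict (Icc s₀ r) with hν
  set μ : Measure (ℝ × ℝ) := ν.prod ν with hμ
  have hμuniv : μ Set.univ = ENNReal.ofReal ((r - s₀) ^ (2:ℝ)) := by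
    rw [hμ, ← Set.univ_prod_univ, Measure.prod_prod, hν, Measure.restrict_apply_univ,
      Real.volume_Icc, ← ENNReal.ofReal_mul hrs]
    congr 1
    rw [Real.rpow_two]
    ring
  -- joint measurability of G
  have hGm : Measurable (fun z : (ℝ × ℝ) × Ω => G z.1 z.2) := by
    apply Measurable.ennreal_ofReal
    apply Measurable.div
    · exact ((hmeas.comp ((measurable_fst.fst).prodMk measurable_snd)).sub
        (hmeas.comp ((measurable_fst.snd).prodMk measurable_snd))).pow_const _
    · exact (measurable_fst.fst.sub measurable_fst.snd).abs.pow measurable_const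
  -- inner double integral as product integral
  have hYeq : ∀ ω, (∫⁻ t in Icc s₀ r, ∫⁻ s in Icc s₀ r,
      ENNReal.ofReal ((v t ω - v s ω) ^ (2 * p₀) / |t - s| ^ (γ₀ / 2)))
      = ∫⁻ q, G q ω ∂μ := by
    intro ω
    exact (lintegral_prod (fun q => G q ω)
      ((hGm.comp (measurable_id.prodMk measurable_const)).aemeasurable)).symm
  -- key pointwise (in q) moment bound
  have key : ∀ t ∈ Icc s₀ (s₀ + δ₁), ∀ s ∈ Icc s₀ (s₀ + δ₁),
      ∫⁻ ω, (G (t, s) ω) ^ p ∂P ≤ ENNReal.ofReal (K * δ₁ ^ e) := by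
    intro t ht s hs
    by_cases hts : t = s
    · subst hts
      have : G (t, t) = fun _ => 0 := by
        funext ω
        simp only [hGdef, sub_self, abs_zero]
        rw [Real.zero_rpow (by positivity : γ₀ / 2 ≠ 0), div_zero, ENNReal.ofReal_zero]
      rw [this]
      simp [ENNReal.zero_rpow_of_pos hp0]
    · have habs : 0 < |t - s| := abs_pos.mpr (sub_ne_zero.mpr hts)
      have hle : |t - s| ≤ δ₁ := by
        rw [abs_sub_le_iff]
        constructor <;> [linarith [ht.1, ht.2, hs.1, hs.2]; linarith [ht.1, ht.2, hs.1, hs.2]]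
      have hcpos : (0:ℝ) < |t - s| ^ (γ₀ * p / 2) := Real.rpow_pos_of_pos habs _
      have hpt : ∀ ω, (G (t, s) ω) ^ p =
          ENNReal.ofReal (|v t ω - v s ω| ^ (2 * (p₀:ℝ) * p)) /
            ENNReal.ofReal (|t - s| ^ (γ₀ * p / 2)) := by
        intro ω
        have hanonneg : (0:ℝ) ≤ (v t ω - v s ω) ^ (2 * p₀) :=
          Even.pow_nonneg (even_two_mul p₀) _
        have hc2 : (0:ℝ) < |t - s| ^ (γ₀ / 2) := Real.rpow_pos_of_pos habs _
        rw [hGdef]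
        simp only
        rw [ENNReal.ofReal_div_of_pos hc2, ENNReal.div_rpow_of_nonneg _ _ hp0.le,
          ENNReal.ofReal_rpow_of_nonneg hanonneg hp0.le,
          ENNReal.ofReal_rpow_of_nonneg hc2.le hp0.le]
        congr 2
        · rw [← Even.pow_abs (even_two_mul p₀), ← Real.rpow_natCast |v t ω - v s ω| (2 * p₀),
            ← Real.rpow_mul (abs_nonneg _)]
          congr 1
          push_cast
          ring
        · rw [← Real.rpow_mul (abs_nonneg _)]
          congr 1
          ring
      calc ∫⁻ ω, (G (t, s) ω) ^ p ∂P
          = ∫⁻ ω, ENNReal.ofReal (|v t ω - v s ω| ^ (2 * (p₀:ℝ) * p)) /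
              ENNReal.ofReal (|t - s| ^ (γ₀ * p / 2)) ∂P := by
            simp_rw [hpt]
        _ = (∫⁻ ω, ENNReal.ofReal (|v t ω - v s ω| ^ (2 * (p₀:ℝ) * p)) ∂P) /
              ENNReal.ofReal (|t - s| ^ (γ₀ * p / 2)) := by
            simp_rw [div_eq_mul_inv]
            rw [lintegral_mul_const' _ _ (by
              simp only [ne_eq, ENNReal.inv_ne_top, ENNReal.ofReal_eq_zero, not_le]
              exact hcpos)]
        _ ≤ ENNReal.ofReal (K * |t - s| ^ ((p₀:ℝ) * p / 2)) /
              ENNReal.ofReal (|t - s| ^ (γ₀ * p / 2)) :=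
            ENNReal.div_le_div_right (hmom t ht s hs) _
        _ = ENNReal.ofReal (K * |t - s| ^ ((p₀:ℝ) * p / 2) / |t - s| ^ (γ₀ * p / 2)) :=
            (ENNReal.ofReal_div_of_pos hcpos).symm
        _ = ENNReal.ofReal (K * |t - s| ^ e) := by
            rw [mul_div_assoc, ← Real.rpow_sub habs]
            congr 2
            rw [he]; ring
        _ ≤ ENNReal.ofReal (K * δ₁ ^ e) := by
            apply ENNReal.ofReal_le_ofReal
            exact mul_le_mul_of_nonneg_left (Real.rpow_le_rpow habs.le hle he0) hK
  -- a.e. membership in the square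
  have hmem : ∀ᵐ q ∂μ, q ∈ (Icc s₀ r) ×ˢ (Icc s₀ r) := by
    rw [hμ, hν, Measure.prod_restrict]
    exact ae_restrict_mem (measurableSet_Icc.prod measurableSet_Icc)
  have hIcc : Icc s₀ r ⊆ Icc s₀ (s₀ + δ₁) := Icc_subset_Icc le_rfl hr2
  -- main chain
  calc ∫⁻ ω, (∫⁻ t in Icc s₀ r, ∫⁻ s in Icc s₀ r,
          ENNReal.ofReal ((v t ω - v s ω) ^ (2 * p₀) / |t - s| ^ (γ₀ / 2))) ^ p ∂P
      = ∫⁻ ω, (∫⁻ q, G q ω ∂μ) ^ p ∂P := by simp_rw [hYeq]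
    _ ≤ ∫⁻ ω, μ Set.univ ^ (p - 1) * ∫⁻ q, (G q ω) ^ p ∂μ ∂P :=
        lintegral_mono fun ω => jensen_aux μ
          ((hGm.comp (measurable_id.prodMk measurable_const)).aemeasurable) hp
    _ = μ Set.univ ^ (p - 1) * ∫⁻ ω, ∫⁻ q, (G q ω) ^ p ∂μ ∂P := by
        have hne : μ Set.univ ^ (p - 1) ≠ ⊤ := by
          rw [hμuniv]
          exact ENNReal.rpow_ne_top_of_nonneg (by linarith) ENNReal.ofReal_ne_top
        rw [lintegral_const_mul' _ _ hne]
    _ = μ Set.univ ^ (p - 1) * ∫⁻ q, ∫⁻ ω, (G q ω) ^ p ∂P ∂μ := by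
        congr 1
        exact lintegral_lintegral_swap
          (((hGm.comp measurable_swap).pow measurable_const).aemeasurable)
    _ ≤ μ Set.univ ^ (p - 1) * ∫⁻ _ : ℝ × ℝ, ENNReal.ofReal (K * δ₁ ^ e) ∂μ := by
        apply mul_le_mul_right
        apply lintegral_mono_ae
        filter_upwards [hmem] with q hq
        exact key q.1 (hIcc hq.1) q.2 (hIcc hq.2)
    _ = ENNReal.ofReal ((r - s₀) ^ (2:ℝ)) ^ (p - 1) *
          (ENNReal.ofReal (K * δ₁ ^ e) * ENNReal.ofReal ((r - s₀) ^ (2:ℝ))) := by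
        rw [lintegral_const, hμuniv]
    _ ≤ ENNReal.ofReal (K * (r - s₀) ^ (2 * p) * δ₁ ^ e) := by
        rw [ENNReal.ofReal_rpow_of_nonneg (Real.rpow_nonneg hrs _) (by linarith : (0:ℝ) ≤ p - 1),
          ← ENNReal.ofReal_mul (by positivity), ← ENNReal.ofReal_mul (by positivity)]
        apply ENNReal.ofReal_le_ofReal
        have hxx : ((r - s₀) ^ (2:ℝ)) ^ (p - 1) * (r - s₀) ^ (2:ℝ) = (r - s₀) ^ (2 * p) := by
          rw [← Real.rpow_mul hrs, ← Real.rpow_add_of_nonneg hrs (by nlinarith) (by norm_num)]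
          congr 1
          ring
        calc ((r - s₀) ^ (2:ℝ)) ^ (p - 1) * (K * δ₁ ^ e * (r - s₀) ^ (2:ℝ))
            = (((r - s₀) ^ (2:ℝ)) ^ (p - 1) * (r - s₀) ^ (2:ℝ)) * (K * δ₁ ^ e) := by ring
          _ = K * (r - s₀) ^ (2 * p) * δ₁ ^ e := by rw [hxx]; ring
          _ ≤ K * (r - s₀) ^ (2 * p) * δ₁ ^ e := le_rfl
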